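/- There exists a constant C > 1 such that for all real numbers λ, μ ≥ 0 and all ξ ∈ Matrix (Fin 3) (Fin 3) ℝ, C^{-1}(λ+μ)‖ξ‖⁴ − C(λ+μ) ≤ (λ/2)·(tr Ẽ(ξ))² + μ·‖Ẽ(ξ)‖² ≤ C(λ+μ)‖ξ‖⁴ + C(λ+μ), where Ẽ(ξ) := (1/2)(ξ + ξᵀ + ξᵀξ). -/

import Mathlib

open Matrix

/-- The Frobenius norm of a real matrix: `‖ξ‖ = (tr(ξᵀξ))^(1/2)`. -/
noncomputable def frobNorm {M N : ℕ} (ξ : Matrix (Fin M) (Fin N) ℝ) : ℝ :=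
  Real.sqrt ((ξᵀ * ξ).trace)

/-- The Green-Saint Venant strain tensor `Ẽ(ξ) = (1/2)(ξ + ξᵀ + ξᵀξ)`. -/
noncomputable def Etil (ξ : Matrix (Fin 3) (Fin 3) ℝ) : Matrix (Fin 3) (Fin 3) ℝ :=
  (1 / 2 : ℝ) • (ξ + ξᵀ + ξᵀ * ξ)

attribute [local instance] Matrix.frobeniusSeminormedAddCommGroup Matrix.frobeniusNormedRing Matrix.frobeniusNormedSpace

lemma trace_tmul {M N : ℕ} (A : Matrix (Fin M) (Fin N) ℝ) :
    (Aᵀ * A).trace = ∑ j, ∑ i, A i j ^ 2 := by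
  simp [Matrix.trace, Matrix.diag, Matrix.mul_apply, sq]

lemma trace_tmul_nonneg {M N : ℕ} (A : Matrix (Fin M) (Fin N) ℝ) :
    0 ≤ (Aᵀ * A).trace := by
  rw [trace_tmul]; positivity

lemma frobNorm_eq_norm {M N : ℕ} (A : Matrix (Fin M) (Fin N) ℝ) : frobNorm A = ‖A‖ := by
  rw [frobNorm, trace_tmul, Matrix.frobenius_norm_def, Real.sqrt_eq_rpow,
    Finset.sum_comm]
  congr 1
  apply Finset.sum_congr rfl; intro i _
  apply Finset.sum_congr rfl; intro j _
  rw [Real.norm_eq_abs, Real.rpow_two, sq_abs, sq]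

lemma frobNorm_sq {M N : ℕ} (A : Matrix (Fin M) (Fin N) ℝ) :
    frobNorm A ^ 2 = (Aᵀ * A).trace :=
  Real.sq_sqrt (trace_tmul_nonneg A)

lemma trace_sq_le_three (A : Matrix (Fin 3) (Fin 3) ℝ) :
    A.trace ^ 2 ≤ 3 * (Aᵀ * A).trace := by
  rw [trace_tmul]
  have ht : A.trace = A 0 0 + A 1 1 + A 2 2 := by
    simp [Matrix.trace, Matrix.diag, Fin.sum_univ_three]
  rw [ht]
  simp only [Fin.sum_univ_three]
  nlinarith [sq_nonneg (A 0 0 - A 1 1), sq_nonneg (A 0 0 - A 2 2), sq_nonneg (A 1 1 - A 2 2),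
    sq_nonneg (A 0 1), sq_nonneg (A 0 2), sq_nonneg (A 1 0), sq_nonneg (A 1 2),
    sq_nonneg (A 2 0), sq_nonneg (A 2 1)]

/-- The two-sided estimate (2.24) of Example 2 for the Saint Venant–Kirchhoff
hyper-elastic energy density `F(ξ) = (λ/2)(tr Ẽ(ξ))² + μ‖Ẽ(ξ)‖²`. -/
theorem svk_two_sided_bound :
    ∃ C : ℝ, 1 < C ∧ ∀ l m : ℝ, 0 ≤ l → 0 ≤ m →
      ∀ ξ : Matrix (Fin 3) (Fin 3) ℝ,
        C⁻¹ * (l + m) * frobNorm ξ ^ 4 - C * (l + m) ≤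
          l / 2 * (Etil ξ).trace ^ 2 + m * frobNorm (Etil ξ) ^ 2 ∧
        l / 2 * (Etil ξ).trace ^ 2 + m * frobNorm (Etil ξ) ^ 2 ≤
          C * (l + m) * frobNorm ξ ^ 4 + C * (l + m) := by
  refine ⟨100, by norm_num, fun l m hl hm ξ => ?_⟩
  set S : ℝ := (ξᵀ * ξ).trace with hS
  set d : ℝ := ξ.trace with hd
  set T : ℝ := ((Etil ξ)ᵀ * Etil ξ).trace with hT
  set e : ℝ := (Etil ξ).trace with he
  have hS0 : 0 ≤ S := trace_tmul_nonneg ξ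
  have hT0 : 0 ≤ T := trace_tmul_nonneg (Etil ξ)
  have hfr2 : frobNorm ξ ^ 2 = S := frobNorm_sq ξ
  have hfr4 : frobNorm ξ ^ 4 = S ^ 2 := by
    rw [show (4:ℕ) = 2*2 by rfl, pow_mul, hfr2]
  have hfe : frobNorm (Etil ξ) ^ 2 = T := frobNorm_sq (Etil ξ)
  -- trace of Etil
  have hee : e = d + S / 2 := by
    rw [he, Etil, Matrix.trace_smul, Matrix.trace_add, Matrix.trace_add,
      Matrix.trace_transpose]
    rw [hd, hS]; ring_nf
  have hd2 : d ^ 2 ≤ 3 * S := trace_sq_le_three ξ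
  have he2 : e ^ 2 ≤ 3 * T := trace_sq_le_three (Etil ξ)
  -- bound T via norms
  have hTle : T ≤ 2 * S ^ 2 + 2 := by
    have t0 : 0 ≤ frobNorm ξ := Real.sqrt_nonneg _
    have hnorm : frobNorm (Etil ξ) ≤ frobNorm ξ + frobNorm ξ ^ 2 / 2 := by
      rw [frobNorm_eq_norm, frobNorm_eq_norm, Etil]
      calc ‖(1 / 2 : ℝ) • (ξ + ξᵀ + ξᵀ * ξ)‖ = (1/2) * ‖ξ + ξᵀ + ξᵀ * ξ‖ := by
            rw [norm_smul]; norm_num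
        _ ≤ (1/2) * (‖ξ + ξᵀ‖ + ‖ξᵀ * ξ‖) := by
            have := norm_add_le (ξ + ξᵀ) (ξᵀ * ξ); linarith
        _ ≤ (1/2) * ((‖ξ‖ + ‖ξᵀ‖) + ‖ξᵀ‖ * ‖ξ‖) := by
            have h1 := norm_add_le ξ ξᵀ
            have h2 := norm_mul_le ξᵀ ξ
            linarith
        _ = ‖ξ‖ + ‖ξ‖ ^ 2 / 2 := by rw [Matrix.frobenius_norm_transpose]; ring
    have h2 : T ≤ (frobNorm ξ + frobNorm ξ ^ 2 / 2) ^ 2 := by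
      rw [← hfe]
      have h0 : 0 ≤ frobNorm (Etil ξ) := Real.sqrt_nonneg _
      exact pow_le_pow_left₀ h0 hnorm 2
    set t : ℝ := frobNorm ξ
    have : t ^ 2 = S := hfr2
    nlinarith [sq_nonneg (t - 1), sq_nonneg (S - 1), sq_nonneg (t*S - t), sq_nonneg S]
  rw [hfr4, hfe]
  clear_value S d T e
  constructor
  · -- lower bound
    have key : 3 * ((100:ℝ)⁻¹ * S ^ 2 - 100) ≤ e ^ 2 := by
      rw [hee]
      nlinarith [sq_nonneg (2*d + S), sq_nonneg (S - 20), hd2, hS0, sq_nonneg d]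
    have hF : (l + m) / 3 * e ^ 2 ≤ l / 2 * e ^ 2 + m * T := by
      have h1 : m * e ^ 2 ≤ m * (3 * T) := mul_le_mul_of_nonneg_left he2 hm
      have h2 : 0 ≤ l * e ^ 2 := mul_nonneg hl (sq_nonneg e)
      nlinarith [h1, h2]
    have h3 : (0:ℝ) ≤ (l + m) / 3 := by linarith
    have h4 := mul_le_mul_of_nonneg_left key h3
    have h5 : (l + m) / 3 * (3 * ((100:ℝ)⁻¹ * S ^ 2 - 100)) =
        (100:ℝ)⁻¹ * (l + m) * S ^ 2 - 100 * (l + m) := by ring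
    rw [h5] at h4
    linarith
  · -- upper bound
    have keyU : e ^ 2 / 2 ≤ 100 * S ^ 2 + 100 := by
      rw [hee]; nlinarith [hd2, hS0, sq_nonneg (S-1), sq_nonneg (d+S)]
    have keyT : T ≤ 100 * S ^ 2 + 100 := by nlinarith [hS0, sq_nonneg S]
    have h6 := mul_le_mul_of_nonneg_left keyU hl
    have h7 := mul_le_mul_of_nonneg_left keyT hm
    nlinarith [h6, h7]
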